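/- Let N ≥ 3, let a_1, …, a_{2N}, x be real numbers and y a nonzero real number. Let G be the N×N matrix whose tridiagonal part is G_{jj} = x + a_{2j−1} + a_{2j}, G_{j,j+1} = 1, G_{j+1,j} = a_{2j} a_{2j+1}, with the two corner entries G_{1,N} = (−1)^{N−1} a_1 a_{2N}/y and G_{N,1} = (−1)^{N−1} y, and all other entries 0. Then det G = y + (∏_{i=1}^{2N} a_i)/y + Σ_{k=0}^{N} e_k^{(N)} x^{N−k}, where e_0^{(N)} = 1 and, for 1 ≤ k ≤ N, e_k^{(N)} is the sum over all cyclically sparse subsets S of {1,…,2N} with |S| = k of ∏_{i∈S} a_i. -/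

import Mathlib

open Finset

/-- sparse subsets of the interval [l,m] -/
def spar (l m : ℕ) : Finset (Finset ℕ) :=
  (Finset.Icc l m).powerset.filter (fun S => ∀ i ∈ S, ∀ j ∈ S, i < j → i + 2 ≤ j)

lemma mem_spar {S : Finset ℕ} {l m : ℕ} :
    S ∈ spar l m ↔ (∀ i ∈ S, l ≤ i ∧ i ≤ m) ∧ ∀ i ∈ S, ∀ j ∈ S, i < j → i + 2 ≤ j := by
  simp [spar, Finset.subset_iff, Finset.mem_Icc, Finset.mem_filter]

noncomputable def SS (b : ℕ → ℝ) (x : ℝ) (l m c : ℕ) : ℝ :=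
  ∑ S ∈ spar l m, (∏ i ∈ S, b i) * x ^ (c - S.card)

lemma card_spar {S : Finset ℕ} {l m : ℕ} (hS : S ∈ spar l m) :
    S.card ≤ (m - l) / 2 + 1 := by
  classical
  rw [mem_spar] at hS
  refine le_trans (Finset.card_le_card_of_injOn (t := Finset.range ((m - l) / 2 + 1))
    (fun i => (i - l) / 2) ?_ ?_) (by simp)
  · intro i hi
    have := hS.1 i hi
    simp only [Finset.mem_coe, Finset.mem_range]
    omega
  · intro i hi j hj hij
    have hi' := hS.1 i hi
    have hj' := hS.1 j hj
    rcases lt_trichotomy i j with h1 | h1 | h1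
    · have := hS.2 i hi j hj h1
      simp only at hij
      omega
    · exact h1
    · have := hS.2 j hj i hi h1
      simp only at hij
      omega

lemma spar_empty {l m : ℕ} (h : m < l) : spar l m = {∅} := by
  ext S
  simp only [mem_spar, Finset.mem_singleton]
  constructor
  · rintro ⟨h1, -⟩
    rw [Finset.eq_empty_iff_forall_notMem]
    intro i hi
    have := h1 i hi
    omega
  · rintro rfl
    simp

lemma SS_empty {b x} {l m c : ℕ} (h : m < l) : SS b x l m c = x ^ c := by
  rw [SS, spar_empty h]
  simp

lemma spar_filter_not_mem (l m : ℕ) :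
    (spar l m).filter (fun S => l ∉ S) = spar (l + 1) m := by
  ext S
  simp only [Finset.mem_filter, mem_spar]
  constructor
  · rintro ⟨⟨h1, h2⟩, h3⟩
    refine ⟨fun i hi => ?_, h2⟩
    have := h1 i hi
    have : l ≠ i := fun h => h3 (h ▸ hi)
    omega
  · rintro ⟨h1, h2⟩
    refine ⟨⟨fun i hi => ?_, h2⟩, fun hl => ?_⟩
    · have := h1 i hi; omega
    · have := h1 l hl; omega

lemma SS_step {b x} {l m c : ℕ} (h : l ≤ m) :
    SS b x l m (c + 1) = SS b x (l + 1) m (c + 1) + b l * SS b x (l + 2) m c := by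
  classical
  rw [SS, ← Finset.sum_filter_add_sum_filter_not (spar l m) (fun S => l ∈ S),
    spar_filter_not_mem]
  rw [add_comm]
  congr 1
  rw [SS, Finset.mul_sum]
  refine Finset.sum_nbij' (fun S => S.erase l) (fun S => insert l S) ?_ ?_ ?_ ?_ ?_
  · intro S hS
    simp only [Finset.mem_filter, mem_spar] at hS
    obtain ⟨⟨h1, h2⟩, h3⟩ := hS
    rw [mem_spar]
    constructor
    · intro i hi
      rw [Finset.mem_erase] at hi
      have := h1 i hi.2
      have : l < i := lt_of_le_of_ne this.1 (Ne.symm hi.1)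
      have := h2 l h3 i hi.2 this
      omega
    · intro i hi j hj hij
      rw [Finset.mem_erase] at hi hj
      exact h2 i hi.2 j hj.2 hij
  · intro S hS
    rw [mem_spar] at hS
    simp only [Finset.mem_filter, mem_spar, Finset.mem_insert]
    refine ⟨⟨?_, ?_⟩, Or.inl trivial⟩
    · intro i hi
      rcases hi with rfl | hi
      · omega
      · have := hS.1 i hi; omega
    · intro i hi j hj hij
      rcases hi with rfl | hi <;> rcases hj with rfl | hj
      · omega
      · have := hS.1 j hj; omega
      · have := hS.1 i hi; omega
      · exact hS.2 i hi j hj hij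
  · intro S hS
    simp only [Finset.mem_filter] at hS
    exact Finset.insert_erase hS.2
  · intro S hS
    rw [mem_spar] at hS
    refine Finset.erase_insert fun hl => ?_
    have := hS.1 l hl
    omega
  · intro S hS
    simp only [Finset.mem_filter] at hS
    have hl : l ∈ S := hS.2
    have hcard : 1 ≤ S.card := Finset.card_pos.mpr ⟨l, hl⟩
    rw [← Finset.mul_prod_erase S b hl, Finset.card_erase_of_mem hl]
    have : c + 1 - S.card = c - (S.card - 1) := by omega
    rw [this]
    ring

lemma SS_x {b : ℕ → ℝ} {x : ℝ} {l m c : ℕ} (h : m + 1 ≤ l + 2 * c) :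
    SS b x l m (c + 1) = x * SS b x l m c := by
  rw [SS, SS, Finset.mul_sum]
  refine Finset.sum_congr rfl fun S hS => ?_
  have hcard : S.card ≤ c := by
    rcases Nat.lt_or_ge m l with h1 | h1
    · rw [spar_empty h1] at hS
      simp only [Finset.mem_singleton] at hS
      subst hS
      simp
    · have := card_spar hS
      omega
  have : c + 1 - S.card = (c - S.card) + 1 := by omega
  rw [this, pow_succ']
  ring

lemma SS_rec (b : ℕ → ℝ) (x : ℝ) (l n : ℕ) :
    SS b x l (l + 2 * n + 3) (n + 2)
      = (x + b l + b (l + 1)) * SS b x (l + 2) (l + 2 * n + 3) (n + 1)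
        - b (l + 1) * b (l + 2) * SS b x (l + 4) (l + 2 * n + 3) n := by
  have h1 : SS b x l (l + 2 * n + 3) (n + 2)
      = SS b x (l + 1) (l + 2 * n + 3) (n + 2)
        + b l * SS b x (l + 2) (l + 2 * n + 3) (n + 1) := SS_step (by omega)
  have h2 : SS b x (l + 1) (l + 2 * n + 3) (n + 2)
      = SS b x (l + 2) (l + 2 * n + 3) (n + 2)
        + b (l + 1) * SS b x (l + 3) (l + 2 * n + 3) (n + 1) := SS_step (by omega)
  have h3 : SS b x (l + 2) (l + 2 * n + 3) (n + 1)
      = SS b x (l + 3) (l + 2 * n + 3) (n + 1)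
        + b (l + 2) * SS b x (l + 4) (l + 2 * n + 3) n := SS_step (by omega)
  have h4 : SS b x (l + 2) (l + 2 * n + 3) (n + 2)
      = x * SS b x (l + 2) (l + 2 * n + 3) (n + 1) := SS_x (by omega)
  have h3' : SS b x (l + 3) (l + 2 * n + 3) (n + 1)
      = SS b x (l + 2) (l + 2 * n + 3) (n + 1)
        - b (l + 2) * SS b x (l + 4) (l + 2 * n + 3) n := by rw [h3]; ring
  rw [h1, h2, h4, h3']
  ring

noncomputable def tval (b : ℕ → ℝ) (x : ℝ) (i j : ℕ) : ℝ :=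
  if i = j then x + b (2 * i + 1) + b (2 * i + 2)
  else if j = i + 1 then 1
  else if i = j + 1 then b (2 * j + 2) * b (2 * j + 3)
  else 0

noncomputable def triD (n : ℕ) (b : ℕ → ℝ) (x : ℝ) : Matrix (Fin n) (Fin n) ℝ :=
  Matrix.of fun i j => tval b x (i : ℕ) (j : ℕ)

lemma tval_shift (b : ℕ → ℝ) (x : ℝ) (i j : ℕ) :
    tval b x (i + 1) (j + 1) = tval (fun k => b (k + 2)) x i j := by
  unfold tval
  split_ifs <;>
    first
      | rfl
      | (exfalso; first | omega | exact ‹False›)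
      | (congr 1 <;> first | rfl | omega | (congr 1 <;> omega))

lemma tval_shift2 (b : ℕ → ℝ) (x : ℝ) (i j : ℕ) :
    tval b x (i + 2) (j + 2) = tval (fun k => b (k + 4)) x i j := by
  rw [show i + 2 = (i + 1) + 1 from rfl, show j + 2 = (j + 1) + 1 from rfl,
    tval_shift, tval_shift]

lemma triD_minor00 (n : ℕ) (b : ℕ → ℝ) (x : ℝ) :
    (triD (n + 2) b x).submatrix Fin.succ Fin.succ = triD (n + 1) (fun i => b (i + 2)) x := by
  ext i j
  simp only [triD, Matrix.submatrix_apply, Matrix.of_apply, Fin.val_succ]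
  exact tval_shift b x i j

lemma succAbove_one_zero (n : ℕ) : (1 : Fin (n + 2)).succAbove 0 = 0 := by
  apply Fin.succAbove_of_castSucc_lt
  simp [Fin.lt_def]

lemma succAbove_one_succ (n : ℕ) (i : Fin n) :
    ((1 : Fin (n + 2)).succAbove i.succ : ℕ) = (i : ℕ) + 2 := by
  rw [Fin.succAbove_of_le_castSucc]
  · simp
  · simp [Fin.le_def]

lemma triD_det_rec (n : ℕ) (b : ℕ → ℝ) (x : ℝ) :
    (triD (n + 2) b x).det
      = (x + b 1 + b 2) * (triD (n + 1) (fun i => b (i + 2)) x).det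
        - b 2 * b 3 * (triD n (fun i => b (i + 4)) x).det := by
  rw [Matrix.det_succ_column_zero, Fin.sum_univ_succ, Fin.sum_univ_succ]
  have hz : ∀ i : Fin n, ((-1 : ℝ)) ^ (((i.succ.succ : Fin (n+2)) : ℕ))
      * (triD (n + 2) b x) i.succ.succ 0
      * ((triD (n+2) b x).submatrix (Fin.succAbove i.succ.succ) Fin.succ).det = 0 := by
    intro i
    have : (triD (n + 2) b x) i.succ.succ 0 = 0 := by
      show tval b x ((i : ℕ) + 1 + 1) 0 = 0
      simp only [tval]
      split_ifs <;> first | rfl | (exfalso; first | omega | exact ‹False›)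
    rw [this]; ring
  rw [Finset.sum_eq_zero (fun i _ => hz i), add_zero]
  have e00 : (triD (n + 2) b x) 0 0 = x + b 1 + b 2 := by
    simp [triD, tval]
  have e10 : (triD (n + 2) b x) (Fin.succ 0) 0 = b 2 * b 3 := by
    simp only [triD, Matrix.of_apply, tval, Fin.val_succ, Fin.val_zero]
    norm_num
  have m0 : ((triD (n+2) b x).submatrix (Fin.succAbove 0) Fin.succ).det
      = (triD (n + 1) (fun i => b (i + 2)) x).det := by
    rw [Fin.succAbove_zero, triD_minor00]
  have m1 : ((triD (n+2) b x).submatrix (Fin.succAbove (Fin.succ 0)) Fin.succ).det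
      = (triD n (fun i => b (i + 4)) x).det := by
    have hone : Fin.succ (0 : Fin (n+1)) = (1 : Fin (n+2)) := rfl
    rw [hone, Matrix.det_succ_row_zero, Fin.sum_univ_succ]
    have hz2 : ∀ j : Fin n, ((-1 : ℝ)) ^ (((j.succ : Fin (n+1)) : ℕ))
        * ((triD (n+2) b x).submatrix (Fin.succAbove 1) Fin.succ) 0 j.succ
        * (((triD (n+2) b x).submatrix (Fin.succAbove 1) Fin.succ).submatrix
            Fin.succ (Fin.succAbove j.succ)).det = 0 := by
      intro j
      have : ((triD (n+2) b x).submatrix (Fin.succAbove 1) Fin.succ) 0 j.succ = 0 := by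
        rw [Matrix.submatrix_apply, succAbove_one_zero]
        show tval b x 0 ((j : ℕ) + 1 + 1) = 0
        simp only [tval]
        split_ifs <;> first | rfl | (exfalso; first | omega | exact ‹False›)
      rw [this]; ring
    rw [Finset.sum_eq_zero (fun j _ => hz2 j), add_zero]
    have e01 : ((triD (n+2) b x).submatrix (Fin.succAbove 1) Fin.succ) 0 0 = 1 := by
      rw [Matrix.submatrix_apply, succAbove_one_zero]
      show tval b x 0 (0 + 1) = 1
      simp [tval]
    have hsub : (((triD (n+2) b x).submatrix (Fin.succAbove 1) Fin.succ).submatrix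
        Fin.succ (Fin.succAbove 0)).det = (triD n (fun i => b (i + 4)) x).det := by
      congr 1
      rw [Fin.succAbove_zero]
      ext i j
      simp only [Matrix.submatrix_apply, triD, Matrix.of_apply, Fin.val_succ,
        succAbove_one_succ]
      exact tval_shift2 b x i j
    rw [e01, hsub]
    simp
  rw [e00, e10, m0, m1]
  simp only [Fin.val_zero, Fin.val_succ, pow_zero, pow_one]
  ring

lemma SS_one (b : ℕ → ℝ) (x : ℝ) (l m : ℕ) (hm : m = l + 1) :
    SS b x l m 1 = x + b l + b (l + 1) := by
  subst hm
  have h1 := SS_step (b := b) (x := x) (l := l) (m := l + 1) (c := 0) (by omega)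
  have h2 := SS_step (b := b) (x := x) (l := l + 1) (m := l + 1) (c := 0) (by omega)
  rw [h1, h2, SS_empty (show l + 1 < l + 1 + 1 by omega),
    SS_empty (show l + 1 < l + 1 + 2 by omega), SS_empty (show l + 1 < l + 2 by omega)]
  ring

lemma SS_rec_flex (b : ℕ → ℝ) (x : ℝ) {l m n : ℕ} (hm : m = l + 2 * n + 3) :
    SS b x l m (n + 2)
      = (x + b l + b (l + 1)) * SS b x (l + 2) m (n + 1)
        - b (l + 1) * b (l + 2) * SS b x (l + 4) m n := by
  subst hm
  exact SS_rec b x l n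

lemma triD_det_rec' (n t : ℕ) (b : ℕ → ℝ) (x : ℝ) :
    (triD (n + 2) (fun i => b (i + t)) x).det
      = (x + b (t + 1) + b (t + 2)) * (triD (n + 1) (fun i => b (i + (t + 2))) x).det
        - b (t + 2) * b (t + 3) * (triD n (fun i => b (i + (t + 4))) x).det := by
  simp only [triD_det_rec]
  rw [show (fun i => b (i + 2 + t)) = (fun i => b (i + (t + 2))) from
      funext fun i => by congr 1; omega,
    show (fun i => b (i + 4 + t)) = (fun i => b (i + (t + 4))) from
      funext fun i => by congr 1; omega,
    show 1 + t = t + 1 from by omega, show 2 + t = t + 2 from by omega,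
    show 3 + t = t + 3 from by omega]

lemma triD_det_SS (b : ℕ → ℝ) (x : ℝ) :
    ∀ n t : ℕ, (triD n (fun i => b (i + t)) x).det = SS b x (t + 1) (t + 2 * n) n := by
  intro n
  induction n using Nat.strong_induction_on with
  | _ n ih =>
  match n, ih with
  | 0, _ =>
    intro t
    rw [SS_empty (by omega)]
    simp
  | 1, _ =>
    intro t
    rw [Matrix.det_fin_one, SS_one b x (t + 1) (t + 2 * 1) (by omega)]
    show tval (fun i => b (i + t)) x 0 0 = _
    simp only [tval, if_pos rfl]
    norm_num
    rw [show 1 + t = t + 1 from by omega, show 2 + t = t + 1 + 1 from by omega]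
  | (k + 2), ih =>
    intro t
    rw [triD_det_rec' k t b x, ih (k + 1) (by omega) (t + 2), ih k (by omega) (t + 4),
      SS_rec_flex b x (l := t + 1) (n := k) (m := t + 2 * (k + 2)) (by omega)]
    simp only [show t + 2 + 1 = t + 1 + 2 from by omega,
      show t + 2 + 2 * (k + 1) = t + 2 * (k + 2) from by omega,
      show t + 4 + 1 = t + 1 + 4 from by omega,
      show t + 4 + 2 * k = t + 2 * (k + 2) from by omega,
      show t + 1 + 1 = t + 2 from by omega]

/-- Sum over all *cyclically sparse* subsets `S` of `{1, …, 2N}` with `|S| = k`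
(any two distinct elements differ by at least 2 and not both `1` and `2N` lie in `S`)
of `∏_{i ∈ S} a i`. -/
noncomputable def cycCoef (a : ℕ → ℝ) (k N : ℕ) : ℝ :=
  ∑ S ∈ (Finset.Icc 1 (2 * N)).powerset.filter
      (fun S => S.card = k ∧ (∀ i ∈ S, ∀ j ∈ S, i < j → i + 2 ≤ j) ∧
        ¬(1 ∈ S ∧ 2 * N ∈ S)),
    ∏ i ∈ S, a i

/-- `e_0^{(N)} = 1` and, for `1 ≤ k ≤ N`, `e_k^{(N)}` is the sum over all cyclically
sparse subsets of `{1,…,2N}` with `|S| = k` of `∏_{i ∈ S} a i`. -/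
noncomputable def eCoef (a : ℕ → ℝ) (k N : ℕ) : ℝ :=
  if k = 0 then 1 else cycCoef a k N

def cycSets (N : ℕ) : Finset (Finset ℕ) :=
  (Finset.Icc 1 (2 * N)).powerset.filter
    (fun S => (∀ i ∈ S, ∀ j ∈ S, i < j → i + 2 ≤ j) ∧ ¬(1 ∈ S ∧ 2 * N ∈ S))

lemma cycCoef_zero (a : ℕ → ℝ) (N : ℕ) : cycCoef a 0 N = 1 := by
  rw [cycCoef]
  have h : ((Finset.Icc 1 (2 * N)).powerset.filter
      (fun S => S.card = 0 ∧ (∀ i ∈ S, ∀ j ∈ S, i < j → i + 2 ≤ j) ∧ ¬(1 ∈ S ∧ 2 * N ∈ S)))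
      = {∅} := by
    ext S
    simp only [Finset.mem_filter, Finset.mem_powerset, Finset.mem_singleton,
      Finset.card_eq_zero]
    constructor
    · rintro ⟨-, h, -⟩; exact h
    · rintro rfl; simp
  rw [h, Finset.sum_singleton, Finset.prod_empty]

lemma kSum (a : ℕ → ℝ) (x : ℝ) (N : ℕ) (hN : 1 ≤ N) :
    ∑ k ∈ Finset.range (N + 1), eCoef a k N * x ^ (N - k)
      = ∑ S ∈ cycSets N, (∏ i ∈ S, a i) * x ^ (N - S.card) := by
  have h1 : ∀ k, eCoef a k N * x ^ (N - k)
      = ∑ S ∈ (cycSets N).filter (fun S => S.card = k),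
          (∏ i ∈ S, a i) * x ^ (N - S.card) := by
    intro k
    have hset : ((Finset.Icc 1 (2 * N)).powerset.filter
        (fun S => S.card = k ∧ (∀ i ∈ S, ∀ j ∈ S, i < j → i + 2 ≤ j) ∧
          ¬(1 ∈ S ∧ 2 * N ∈ S)))
        = (cycSets N).filter (fun S => S.card = k) := by
      ext S
      simp only [cycSets, Finset.mem_filter, Finset.mem_powerset]
      tauto
    have he : eCoef a k N
        = ∑ S ∈ (cycSets N).filter (fun S => S.card = k), ∏ i ∈ S, a i := by
      rcases Nat.eq_zero_or_pos k with rfl | hk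
      · simp only [eCoef, if_pos rfl]
        rw [← hset, show (∑ S ∈ (Finset.Icc 1 (2 * N)).powerset.filter
            (fun S => S.card = 0 ∧ (∀ i ∈ S, ∀ j ∈ S, i < j → i + 2 ≤ j) ∧
              ¬(1 ∈ S ∧ 2 * N ∈ S)), ∏ i ∈ S, a i) = cycCoef a 0 N from rfl,
          cycCoef_zero]
        simp
      · simp only [eCoef, if_neg (by omega : k ≠ 0)]
        rw [cycCoef, hset]
    rw [he, Finset.sum_mul]
    refine Finset.sum_congr rfl fun S hS => ?_
    simp only [Finset.mem_filter] at hS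
    rw [hS.2]
  simp only [h1]
  apply Finset.sum_fiberwise_of_maps_to
  intro S hS
  simp only [Finset.mem_range]
  have hsp : S ∈ spar 1 (2 * N) := by
    simp only [cycSets, Finset.mem_filter] at hS
    simp only [spar, Finset.mem_filter]
    exact ⟨hS.1, hS.2.1⟩
  have := card_spar hsp
  omega

lemma prod_sub_range (a : ℕ → ℝ) : ∀ m : ℕ,
    ∏ i ∈ Finset.range m, (a (2 * i + 2) * a (2 * i + 3))
      = ∏ i ∈ Finset.Icc 2 (2 * m + 1), a i := by
  intro m
  induction m with
  | zero => rw [Finset.Icc_eq_empty (by omega)]; simp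
  | succ m ihm =>
    have h1 : ∏ i ∈ Finset.Icc 2 (2 * (m + 1) + 1), a i
        = (∏ i ∈ Finset.Icc 2 (2 * m + 2), a i) * a (2 * m + 3) := by
      rw [show 2 * (m + 1) + 1 = (2 * m + 2) + 1 from by ring,
        Finset.prod_Icc_succ_top (show 2 ≤ 2 * m + 2 + 1 by omega) a,
        show 2 * m + 2 + 1 = 2 * m + 3 from by omega]
    have h2 : ∏ i ∈ Finset.Icc 2 (2 * m + 2), a i
        = (∏ i ∈ Finset.Icc 2 (2 * m + 1), a i) * a (2 * m + 2) := by
      rw [show 2 * m + 2 = (2 * m + 1) + 1 from by ring,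
        Finset.prod_Icc_succ_top (show 2 ≤ 2 * m + 1 + 1 by omega) a,
        show 2 * m + 1 + 1 = 2 * m + 2 from by omega]
    rw [Finset.prod_range_succ, ihm, h1, h2]
    ring

lemma prod_Icc_one (a : ℕ → ℝ) (n : ℕ) :
    a 1 * ((∏ i ∈ Finset.range (n + 2), (a (2 * i + 2) * a (2 * i + 3))) * a (2 * (n + 3)))
      = ∏ i ∈ Finset.Icc 1 (2 * (n + 3)), a i := by
  have h1 : ∏ i ∈ Finset.Icc 1 (2 * (n + 3)), a i
      = (∏ i ∈ Finset.Icc 1 (2 * n + 5), a i) * a (2 * (n + 3)) := by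
    rw [show 2 * (n + 3) = (2 * n + 5) + 1 from by ring,
      Finset.prod_Icc_succ_top (show 1 ≤ 2 * n + 5 + 1 by omega) a]
  have h2 : Finset.Icc 1 (2 * n + 5) = insert 1 (Finset.Icc 2 (2 * n + 5)) := by
    ext i; simp only [Finset.mem_Icc, Finset.mem_insert]; omega
  rw [prod_sub_range, h1, h2, Finset.prod_insert (by simp),
    show 2 * (n + 2) + 1 = 2 * n + 5 from by ring]
  ring

lemma cycSplit (a : ℕ → ℝ) (x : ℝ) (n : ℕ) :
    SS a x 1 (2 * (n + 3)) (n + 3)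
      = (∑ S ∈ cycSets (n + 3), (∏ i ∈ S, a i) * x ^ ((n + 3) - S.card))
        + a 1 * a (2 * (n + 3)) * SS a x 3 (2 * n + 4) (n + 1) := by
  classical
  have hnot : (spar 1 (2 * (n + 3))).filter
      (fun S => ¬(1 ∈ S ∧ 2 * (n + 3) ∈ S)) = cycSets (n + 3) := by
    ext S
    simp only [spar, cycSets, Finset.mem_filter, Finset.mem_powerset]
    tauto
  have hboth : ∑ S ∈ (spar 1 (2 * (n + 3))).filter (fun S => 1 ∈ S ∧ 2 * (n + 3) ∈ S),
        (∏ i ∈ S, a i) * x ^ ((n + 3) - S.card)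
      = a 1 * a (2 * (n + 3)) * SS a x 3 (2 * n + 4) (n + 1) := by
    rw [SS, Finset.mul_sum]
    refine Finset.sum_nbij' (fun S => (S.erase 1).erase (2 * (n + 3)))
      (fun S => insert 1 (insert (2 * (n + 3)) S)) ?_ ?_ ?_ ?_ ?_
    · intro S hS
      simp only [Finset.mem_filter, mem_spar] at hS
      obtain ⟨⟨hb, hsp⟩, h1, hM⟩ := hS
      rw [mem_spar]
      constructor
      · intro i hi
        rw [Finset.mem_erase, Finset.mem_erase] at hi
        obtain ⟨hiM, hi1, hiS⟩ := hi
        have hbi := hb i hiS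
        have g1 : 1 + 2 ≤ i := hsp 1 h1 i hiS (by omega)
        have g2 : i + 2 ≤ 2 * (n + 3) := hsp i hiS (2 * (n + 3)) hM (by omega)
        omega
      · intro i hi j hj hij
        rw [Finset.mem_erase, Finset.mem_erase] at hi hj
        exact hsp i hi.2.2 j hj.2.2 hij
    · intro S hS
      rw [mem_spar] at hS
      obtain ⟨hb, hsp⟩ := hS
      simp only [Finset.mem_filter, mem_spar, Finset.mem_insert]
      refine ⟨⟨?_, ?_⟩, ?_, ?_⟩
      · intro i hi
        rcases hi with rfl | rfl | hi
        · omega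
        · omega
        · have := hb i hi; omega
      · intro i hi j hj hij
        rcases hi with rfl | rfl | hi <;> rcases hj with rfl | rfl | hj <;>
          first
            | omega
            | (have := hb i hi; omega)
            | (have := hb j hj; omega)
            | (have := hb i hi; have := hb j hj; omega)
            | exact hsp i hi j hj hij
      · tauto
      · tauto
    · intro S hS
      simp only [Finset.mem_filter] at hS
      obtain ⟨-, h1, hM⟩ := hS
      show insert 1 (insert (2 * (n + 3)) ((S.erase 1).erase (2 * (n + 3)))) = S
      rw [Finset.insert_erase (Finset.mem_erase.mpr ⟨by omega, hM⟩), Finset.insert_erase h1]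
    · intro S hS
      rw [mem_spar] at hS
      have hn1 : (1 : ℕ) ∉ insert (2 * (n + 3)) S := by
        simp only [Finset.mem_insert]
        push_neg
        exact ⟨by omega, fun h => by have := hS.1 1 h; omega⟩
      have hnM : (2 * (n + 3)) ∉ S := fun h => by have := hS.1 _ h; omega
      show ((insert 1 (insert (2 * (n + 3)) S)).erase 1).erase (2 * (n + 3)) = S
      rw [Finset.erase_insert hn1, Finset.erase_insert hnM]
    · intro S hS
      simp only [Finset.mem_filter] at hS
      obtain ⟨-, h1, hM⟩ := hS
      have hM1 : 2 * (n + 3) ∈ S.erase 1 := Finset.mem_erase.mpr ⟨by omega, hM⟩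
      have hcard : 2 ≤ S.card :=
        Finset.one_lt_card.mpr ⟨1, h1, 2 * (n + 3), hM, by omega⟩
      rw [← Finset.mul_prod_erase S a h1, ← Finset.mul_prod_erase (S.erase 1) a hM1,
        Finset.card_erase_of_mem hM1, Finset.card_erase_of_mem h1,
        show n + 3 - S.card = n + 1 - (S.card - 1 - 1) from by omega]
      ring
  rw [SS, ← Finset.sum_filter_add_sum_filter_not (spar 1 (2 * (n + 3)))
    (fun S => 1 ∈ S ∧ 2 * (n + 3) ∈ S), hnot, hboth]
  ring

/-- The `N × N` matrix whose tridiagonal part has diagonal `x + a_{2j-1} + a_{2j}`,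
superdiagonal `1`, subdiagonal `a_{2j} a_{2j+1}`, together with the corner entries
`G_{1,N} = (-1)^{N-1} a_1 a_{2N} / y` and `G_{N,1} = (-1)^{N-1} y`
(rows and columns being 1-indexed). -/
noncomputable def todaLax (N : ℕ) (a : ℕ → ℝ) (x y : ℝ) : Matrix (Fin N) (Fin N) ℝ :=
  Matrix.of fun i j =>
    if (i : ℕ) = (j : ℕ) then x + a (2 * (i : ℕ) + 1) + a (2 * (i : ℕ) + 2)
    else if (j : ℕ) = (i : ℕ) + 1 then 1
    else if (i : ℕ) = (j : ℕ) + 1 then a (2 * (j : ℕ) + 2) * a (2 * (j : ℕ) + 3)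
    else if (i : ℕ) = 0 ∧ (j : ℕ) = N - 1 then (-1 : ℝ) ^ (N - 1) * a 1 * a (2 * N) / y
    else if (i : ℕ) = N - 1 ∧ (j : ℕ) = 0 then (-1 : ℝ) ^ (N - 1) * y
    else 0

noncomputable def vv (n : ℕ) (y : ℝ) : Fin (n + 3) → ℝ :=
  fun i => if (i : ℕ) = n + 2 then (-1 : ℝ) ^ (n + 2) * y else 0

noncomputable def ww (n : ℕ) (a : ℕ → ℝ) (y : ℝ) : Fin (n + 3) → ℝ :=
  fun i => if (i : ℕ) = 0 then (-1 : ℝ) ^ (n + 2) * a 1 * a (2 * (n + 3)) / y else 0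

lemma split_entry (n : ℕ) (a : ℕ → ℝ) (x y : ℝ) (i j : Fin (n + 3)) :
    (((triD (n + 3) a x).updateCol 0
        (fun i => triD (n + 3) a x i 0 + vv n y i)).updateCol
      (Fin.last (n + 2))
      (fun i => triD (n + 3) a x i (Fin.last (n + 2)) + ww n a y i)) i j
    = tval a x (i : ℕ) (j : ℕ)
      + (if (i : ℕ) = 0 ∧ (j : ℕ) = n + 2 then
          (-1 : ℝ) ^ (n + 2) * a 1 * a (2 * (n + 3)) / y else 0)
      + (if (i : ℕ) = n + 2 ∧ (j : ℕ) = 0 then (-1 : ℝ) ^ (n + 2) * y else 0) := by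
  rw [Matrix.updateCol_apply, Matrix.updateCol_apply]
  by_cases hjl : j = Fin.last (n + 2)
  · subst hjl
    rw [if_pos rfl]
    have h1 : ((Fin.last (n + 2) : Fin (n + 3)) : ℕ) = n + 2 := rfl
    simp only [h1, ww, triD, Matrix.of_apply, and_true, Nat.add_eq_zero, OfNat.ofNat_ne_zero,
      and_false, if_false, add_zero]
  · have hjl' : (j : ℕ) ≠ n + 2 := by
      intro h; exact hjl (Fin.ext (by rw [h]; rfl))
    rw [if_neg hjl]
    by_cases hj0 : j = 0
    · subst hj0
      rw [if_pos rfl]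
      have h0 : ((0 : Fin (n + 3)) : ℕ) = 0 := rfl
      simp only [h0, vv, triD, Matrix.of_apply, and_true]
      rw [if_neg (show ¬((i : ℕ) = 0 ∧ (0 : ℕ) = n + 2) by omega)]
      ring
    · have hj0' : (j : ℕ) ≠ 0 := by
        intro h; exact hj0 (Fin.ext (by rw [h]; rfl))
      rw [if_neg hj0]
      rw [if_neg (by omega : ¬((i : ℕ) = 0 ∧ (j : ℕ) = n + 2)),
        if_neg (by omega : ¬((i : ℕ) = n + 2 ∧ (j : ℕ) = 0))]
      simp only [triD, Matrix.of_apply]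
      ring

lemma todaLax_split (n : ℕ) (a : ℕ → ℝ) (x y : ℝ) :
    todaLax (n + 3) a x y
      = ((triD (n + 3) a x).updateCol 0
            (fun i => triD (n + 3) a x i 0 + vv n y i)).updateCol
          (Fin.last (n + 2))
          (fun i => triD (n + 3) a x i (Fin.last (n + 2)) + ww n a y i) := by
  ext i j
  have hi := i.isLt
  have hj := j.isLt
  rw [split_entry]
  simp only [todaLax, Matrix.of_apply, tval, show n + 3 - 1 = n + 2 from rfl]
  split_ifs <;> first | ring1 | (exfalso; omega)

lemma updateColumn_comm' {k : ℕ} (M : Matrix (Fin k) (Fin k) ℝ) {j j' : Fin k}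
    (h : j ≠ j') (c c' : Fin k → ℝ) :
    (M.updateCol j c).updateCol j' c' = (M.updateCol j' c').updateCol j c := by
  ext i jj
  simp only [Matrix.updateCol_apply]
  split_ifs with h1 h2 <;> first | rfl | (exfalso; exact h (by rw [← h2, h1]))

lemma det_todaLax_split (n : ℕ) (a : ℕ → ℝ) (x y : ℝ) :
    (todaLax (n + 3) a x y).det
      = (triD (n + 3) a x).det
        + ((triD (n + 3) a x).updateCol 0 (vv n y)).det
        + ((triD (n + 3) a x).updateCol (Fin.last (n + 2)) (ww n a y)).det
        + (((triD (n + 3) a x).updateCol 0 (vv n y)).updateCol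
            (Fin.last (n + 2)) (ww n a y)).det := by
  set T := triD (n + 3) a x with hT
  have h0l : (0 : Fin (n + 3)) ≠ Fin.last (n + 2) := by
    simp [Fin.ext_iff]
  rw [todaLax_split]
  set U := T.updateCol 0 (fun i => T i 0 + vv n y i) with hU
  have hcol : (fun i => T i (Fin.last (n + 2)) + ww n a y i)
      = (fun i => U i (Fin.last (n + 2))) + ww n a y := by
    funext i
    simp only [hU, Matrix.updateCol_apply, if_neg (Ne.symm h0l), Pi.add_apply]
  rw [hcol, Matrix.det_updateCol_add, Matrix.updateCol_eq_self]
  have hcol0 : (fun i => T i 0 + vv n y i) = (fun i => T i 0) + vv n y := rfl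
  have hUdet : U.det = T.det + (T.updateCol 0 (vv n y)).det := by
    rw [hU, hcol0, Matrix.det_updateCol_add, Matrix.updateCol_eq_self]
  have hsw : U.updateCol (Fin.last (n + 2)) (ww n a y)
      = ((T.updateCol (Fin.last (n + 2)) (ww n a y)).updateCol 0
          (fun i => T i 0 + vv n y i)) := by
    rw [hU, updateColumn_comm' T h0l]
  have hcol0' : (fun i => T i 0 + vv n y i)
      = (fun i => (T.updateCol (Fin.last (n + 2)) (ww n a y)) i 0) + vv n y := by
    funext i
    simp only [Matrix.updateCol_apply, if_neg h0l, Pi.add_apply]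
  have hsplit2 : (U.updateCol (Fin.last (n + 2)) (ww n a y)).det
      = (T.updateCol (Fin.last (n + 2)) (ww n a y)).det
        + ((T.updateCol 0 (vv n y)).updateCol (Fin.last (n + 2)) (ww n a y)).det := by
    rw [hsw, hcol0', Matrix.det_updateCol_add, Matrix.updateCol_eq_self,
      updateColumn_comm' T (Ne.symm h0l)]
  rw [hUdet, hsplit2]
  ring

lemma detD1 (n : ℕ) (a : ℕ → ℝ) (x y : ℝ) :
    ((triD (n + 3) a x).updateCol 0 (vv n y)).det = y := by
  rw [Matrix.det_succ_column_zero]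
  rw [Finset.sum_eq_single_of_mem (Fin.last (n + 2)) (Finset.mem_univ _) ?_]
  · have hval : ((triD (n + 3) a x).updateCol 0 (vv n y)) (Fin.last (n + 2)) 0
        = (-1 : ℝ) ^ (n + 2) * y := by
      rw [Matrix.updateCol_apply, if_pos rfl]
      simp [vv]
    rw [hval, Fin.val_last, Fin.succAbove_last]
    have hdet : (((triD (n + 3) a x).updateCol 0 (vv n y)).submatrix
        Fin.castSucc Fin.succ).det = 1 := by
      rw [Matrix.det_of_lowerTriangular _ ?_]
      · apply Finset.prod_eq_one
        intro i _
        rw [Matrix.submatrix_apply, Matrix.updateCol_apply,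
          if_neg (Fin.succ_ne_zero i)]
        show tval a x (i : ℕ) ((i : ℕ) + 1) = 1
        simp only [tval]
        split_ifs <;> first | rfl | (exfalso; omega)
      · intro i j hij
        have hlt : (i : ℕ) < (j : ℕ) := hij
        rw [Matrix.submatrix_apply, Matrix.updateCol_apply,
          if_neg (Fin.succ_ne_zero j)]
        show tval a x (i : ℕ) ((j : ℕ) + 1) = 0
        simp only [tval]
        split_ifs <;> first | rfl | (exfalso; omega)
    rw [hdet, mul_one, ← mul_assoc, ← pow_add]
    rw [(show Even (n + 2 + (n + 2)) from ⟨n + 2, by ring⟩).neg_one_pow, one_mul]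
  · intro i _ hne
    have hz : ((triD (n + 3) a x).updateCol 0 (vv n y)) i 0 = 0 := by
      rw [Matrix.updateCol_apply, if_pos rfl]
      simp only [vv]
      rw [if_neg]
      intro h
      exact hne (Fin.ext (by rw [h, Fin.val_last]))
    rw [hz]
    ring

lemma detD2 (n : ℕ) (a : ℕ → ℝ) (x y : ℝ) :
    ((triD (n + 3) a x).updateCol (Fin.last (n + 2)) (ww n a y)).det
      = (∏ i ∈ Finset.Icc 1 (2 * (n + 3)), a i) / y := by
  rw [Matrix.det_succ_column _ (Fin.last (n + 2))]
  rw [Finset.sum_eq_single_of_mem (0 : Fin (n + 3)) (Finset.mem_univ _) ?_]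
  · have hval : ((triD (n + 3) a x).updateCol (Fin.last (n + 2)) (ww n a y)) 0
        (Fin.last (n + 2)) = (-1 : ℝ) ^ (n + 2) * a 1 * a (2 * (n + 3)) / y := by
      rw [Matrix.updateCol_apply, if_pos rfl]
      simp [ww]
    rw [hval, Fin.val_last, Fin.val_zero, Fin.succAbove_last, Fin.succAbove_zero]
    have hdet : (((triD (n + 3) a x).updateCol (Fin.last (n + 2)) (ww n a y)).submatrix
        Fin.succ Fin.castSucc).det
        = ∏ i ∈ Finset.range (n + 2), (a (2 * i + 2) * a (2 * i + 3)) := by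
      rw [Matrix.det_of_upperTriangular ?_]
      · rw [← Fin.prod_univ_eq_prod_range (fun i => a (2 * i + 2) * a (2 * i + 3)) (n + 2)]
        apply Finset.prod_congr rfl
        intro i _
        rw [Matrix.submatrix_apply, Matrix.updateCol_apply,
          if_neg (Fin.castSucc_lt_last i).ne]
        show tval a x ((i : ℕ) + 1) (i : ℕ) = a (2 * (i : ℕ) + 2) * a (2 * (i : ℕ) + 3)
        simp only [tval]
        split_ifs <;> first | rfl | (exfalso; omega)
      · intro i j hij
        have hlt : (j : ℕ) < (i : ℕ) := hij
        rw [Matrix.submatrix_apply, Matrix.updateCol_apply,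
          if_neg (Fin.castSucc_lt_last j).ne]
        show tval a x ((i : ℕ) + 1) (j : ℕ) = 0
        simp only [tval]
        split_ifs <;> first | rfl | (exfalso; omega)
    rw [hdet, ← prod_Icc_one a n, show (0 : ℕ) + (n + 2) = n + 2 from by omega]
    have hsq : (-1 : ℝ) ^ (n + 2) * ((-1 : ℝ) ^ (n + 2) * a 1 * a (2 * (n + 3)) / y)
        = a 1 * a (2 * (n + 3)) / y := by
      rw [show ((-1 : ℝ) ^ (n + 2) * a 1 * a (2 * (n + 3)) / y)
          = (-1 : ℝ) ^ (n + 2) * (a 1 * a (2 * (n + 3)) / y) from by ring,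
        ← mul_assoc, ← pow_add,
        (show Even (n + 2 + (n + 2)) from ⟨n + 2, by ring⟩).neg_one_pow, one_mul]
    rw [hsq]
    ring
  · intro i _ hne
    have hz : ((triD (n + 3) a x).updateCol (Fin.last (n + 2)) (ww n a y)) i
        (Fin.last (n + 2)) = 0 := by
      rw [Matrix.updateCol_apply, if_pos rfl]
      simp only [ww]
      rw [if_neg]
      intro h
      exact hne (Fin.ext (by rw [h, Fin.val_zero]))
    rw [hz]
    ring

lemma detD3 (n : ℕ) (a : ℕ → ℝ) (x y : ℝ) (hy : y ≠ 0) :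
    (((triD (n + 3) a x).updateCol 0 (vv n y)).updateCol
        (Fin.last (n + 2)) (ww n a y)).det
      = -(a 1 * a (2 * (n + 3)) * (triD (n + 1) (fun i => a (i + 2)) x).det) := by
  have h0l : (0 : Fin (n + 3)) ≠ Fin.last (n + 2) := by
    intro h
    have := Fin.ext_iff.mp h
    simp [Fin.val_last] at this
  set A := ((triD (n + 3) a x).updateCol 0 (vv n y)).updateCol
    (Fin.last (n + 2)) (ww n a y) with hA
  have hcol0 : ∀ i : Fin (n + 3), A i 0 = vv n y i := by
    intro i
    rw [hA, Matrix.updateCol_apply, if_neg h0l, Matrix.updateCol_apply, if_pos rfl]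
  rw [Matrix.det_succ_column_zero]
  rw [Finset.sum_eq_single_of_mem (Fin.last (n + 2)) (Finset.mem_univ _) ?_]
  · rw [hcol0, Fin.val_last, Fin.succAbove_last]
    have hvv : vv n y (Fin.last (n + 2)) = (-1 : ℝ) ^ (n + 2) * y := by simp [vv]
    rw [hvv]
    set M := A.submatrix Fin.castSucc Fin.succ with hM
    have hMlast : ∀ i : Fin (n + 2), M i (Fin.last (n + 1))
        = (if (i : ℕ) = 0 then (-1 : ℝ) ^ (n + 2) * a 1 * a (2 * (n + 3)) / y else 0) := by
      intro i
      rw [hM, Matrix.submatrix_apply, Fin.succ_last, hA, Matrix.updateCol_apply,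
        if_pos rfl]
      simp [ww]
    have hMdet : M.det
        = (-1 : ℝ) ^ (n + 1) * ((-1 : ℝ) ^ (n + 2) * a 1 * a (2 * (n + 3)) / y)
          * (triD (n + 1) (fun i => a (i + 2)) x).det := by
      rw [Matrix.det_succ_column M (Fin.last (n + 1))]
      rw [Finset.sum_eq_single_of_mem (0 : Fin (n + 2)) (Finset.mem_univ _) ?_]
      · rw [hMlast, Fin.val_zero, if_pos rfl, Fin.val_last, Fin.succAbove_zero,
          Fin.succAbove_last, show (0 : ℕ) + (n + 1) = n + 1 from by omega]
        congr 1
        congr 1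
        · ext i j
          rw [Matrix.submatrix_apply, hM, Matrix.submatrix_apply, hA,
            Matrix.updateCol_apply, if_neg ?_, Matrix.updateCol_apply,
            if_neg (Fin.succ_ne_zero _)]
          · show tval a x ((i : ℕ) + 1) ((j : ℕ) + 1) = _
            rw [tval_shift]
            rfl
          · intro h
            have hv := Fin.ext_iff.mp h
            simp only [Fin.val_succ, Fin.coe_castSucc, Fin.val_last] at hv
            have := j.isLt
            omega
      · intro i _ hne
        rw [hMlast, if_neg (fun h => hne (Fin.ext (by rw [h, Fin.val_zero])))]
        ring
    rw [hMdet]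
    have hs : (-1 : ℝ) ^ (n + 2) * (-1 : ℝ) ^ (n + 2) * (-1 : ℝ) ^ (n + 1)
        * (-1 : ℝ) ^ (n + 2) = -1 := by
      rw [← pow_add, ← pow_add, ← pow_add]
      exact (show Odd (n + 2 + (n + 2) + (n + 1) + (n + 2)) from ⟨2 * n + 3, by ring⟩).neg_one_pow
    have hyy : y * y⁻¹ = 1 := mul_inv_cancel₀ hy
    linear_combination (y * y⁻¹ * a 1 * a (2 * (n + 3))
      * (triD (n + 1) (fun i => a (i + 2)) x).det) * hs
      - (a 1 * a (2 * (n + 3)) * (triD (n + 1) (fun i => a (i + 2)) x).det) * hyy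
  · intro i _ hne
    rw [hcol0]
    have : vv n y i = 0 := by
      simp only [vv]
      rw [if_neg (fun h => hne (Fin.ext (by rw [h, Fin.val_last])))]
    rw [this]
    ring

/-- `det G = y + (∏_{i=1}^{2N} a_i)/y + ∑_{k=0}^{N} e_k^{(N)} x^{N-k}`. -/
theorem det_todaLax (N : ℕ) (hN : 3 ≤ N) (a : ℕ → ℝ) (x : ℝ) (y : ℝ) (hy : y ≠ 0) :
    (todaLax N a x y).det
      = y + (∏ i ∈ Finset.Icc 1 (2 * N), a i) / y
        + ∑ k ∈ Finset.range (N + 1), eCoef a k N * x ^ (N - k) := by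
  obtain ⟨n, rfl⟩ : ∃ n, N = n + 3 := ⟨N - 3, by omega⟩
  rw [det_todaLax_split, detD1, detD2, detD3 n a x y hy]
  have hT : (triD (n + 3) a x).det = SS a x 1 (2 * (n + 3)) (n + 3) := by
    have h := triD_det_SS a x (n + 3) 0
    rw [show (fun i => a (i + 0)) = a from rfl,
      show (0 + 2 * (n + 3)) = 2 * (n + 3) from by omega] at h
    exact h
  have hT2 : (triD (n + 1) (fun i => a (i + 2)) x).det = SS a x 3 (2 * n + 4) (n + 1) := by
    have h := triD_det_SS a x (n + 1) 2
    rw [show (2 : ℕ) + 1 = 3 from rfl, show 2 + 2 * (n + 1) = 2 * n + 4 from by omega] at h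
    exact h
  rw [hT, hT2, cycSplit a x n, kSum a x (n + 3) (by omega)]
  ring
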